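/- Let G be a finite solvable group and N a normal subgroup of G with |G:N| = n and kpp_G(N) = k. Then |G| ≤ n · ∏_{i=0}^{nk-1} (nk-i)^(2^i). -/

import Mathlib

open scoped commutatorElement

def ppBound (m : ℕ) : ℕ := ∏ i ∈ Finset.range m, (m - i) ^ 2 ^ i

lemma ppBound_pos (m : ℕ) : 0 < ppBound m :=
  Finset.prod_pos fun i hi => pow_pos (by simp at hi; omega) _

lemma ppBound_succ (m : ℕ) : ppBound (m + 1) = (m + 1) * ppBound m ^ 2 := by
  unfold ppBound
  rw [Finset.prod_range_succ']
  have h : ∀ i ∈ Finset.range m, (m + 1 - (i + 1)) ^ 2 ^ (i + 1) = ((m - i) ^ 2 ^ i) ^ 2 := by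
    intro i hi
    rw [pow_succ, pow_mul]
    congr 2
    omega
  rw [Finset.prod_congr rfl h, ← Finset.prod_pow]
  simp [mul_comm]

def IsPP {H : Type*} [Monoid H] (x : H) : Prop := ∃ p m : ℕ, p.Prime ∧ orderOf x = p ^ m

lemma isPP_one {H : Type*} [Monoid H] : IsPP (1 : H) := ⟨2, 0, Nat.prime_two, by simp⟩

def kppC (H : Type*) [Group H] : Set (Set H) := {C | ∃ x : H, IsPP x ∧ C = conjugatesOf x}

lemma ncard_le_card_of_subset_range {α β : Type*} [Finite β] {s : Set α} {f : β → α}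
    (h : s ⊆ Set.range f) : s.ncard ≤ Nat.card β := by
  calc s.ncard ≤ (Set.range f).ncard := Set.ncard_le_ncard h (Set.finite_range f)
    _ = Nat.card (Set.range f) := (Nat.card_coe_set_eq _).symm
    _ ≤ Nat.card β := Nat.card_le_card_of_surjective _ Set.rangeFactorization_surjective

lemma exists_pp_lift {H : Type*} [Group H] [Finite H] (V : Subgroup H) [V.Normal]
    (z : H ⧸ V) (h : IsPP z) : ∃ x : H, IsPP x ∧ (x : H ⧸ V) = z := by
  obtain ⟨p, a, hp, ho⟩ := h
  obtain ⟨x, rfl⟩ := QuotientGroup.mk_surjective z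
  set o := orderOf x with ho'
  have ho0 : o ≠ 0 := (orderOf_pos x).ne'
  have hdvd : orderOf ((x : H ⧸ V)) ∣ o := orderOf_map_dvd (QuotientGroup.mk' V) x
  have hpa : p ^ a ∣ o := ho ▸ hdvd
  set b := o.factorization p with hb
  have hab : p ^ a ∣ p ^ b :=
    pow_dvd_pow p ((Nat.Prime.pow_dvd_iff_le_factorization hp ho0).mp hpa)
  set t := o / p ^ b with ht
  have hot : p ^ b * t = o := Nat.ordProj_mul_ordCompl_eq_self o p
  have hco : Nat.Coprime (p ^ b) t :=
    Nat.Coprime.pow_left b (Nat.coprime_ordCompl hp ho0)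
  obtain ⟨s, hs1, hs2⟩ := Nat.chineseRemainder hco 1 0
  refine ⟨x ^ s, ?_, ?_⟩
  · have h1 : (x ^ s) ^ p ^ b = 1 := by
      rw [← pow_mul]
      apply orderOf_dvd_iff_pow_eq_one.mp
      rw [← ho', ← hot, mul_comm s (p ^ b)]
      exact Nat.mul_dvd_mul_left _ ((Nat.modEq_zero_iff_dvd).mp hs2)
    obtain ⟨c, _, hc⟩ := (Nat.dvd_prime_pow hp).mp (orderOf_dvd_of_pow_eq_one h1)
    exact ⟨p, c, hp, hc⟩
  · have : ((x : H ⧸ V)) ^ s = ((x : H ⧸ V)) ^ 1 := by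
      rw [pow_eq_pow_iff_modEq, ho]
      exact (hs1.of_dvd hab)
    simpa using this

universe u

theorem key_bound : ∀ (c m : ℕ) (H : Type u) [Group H] [Finite H], IsSolvable H →
    Nat.card H ≤ c → (kppC H).ncard ≤ m → Nat.card H ≤ ppBound m := by
  intro c
  induction c with
  | zero => intro m H _ _ _ hc _; have := Nat.card_pos (α := H); omega
  | succ c ih =>
    intro m H _ _ hsolv hc hm
    haveI := hsolv
    by_cases htriv : Nat.card H ≤ 1
    · exact htriv.trans (ppBound_pos m)
    push_neg at htriv
    haveI : Nontrivial H := Finite.one_lt_card_iff_nontrivial.mp htriv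
    classical
    -- minimal step of the derived series
    have hex : ∃ nn, derivedSeries H nn = ⊥ := hsolv.solvable
    set nmin := Nat.find hex with hnmin
    have hnbot : derivedSeries H nmin = ⊥ := Nat.find_spec hex
    have hn0 : nmin ≠ 0 := by
      intro h
      rw [h, derivedSeries_zero] at hnbot
      exact absurd hnbot top_ne_bot
    set A := derivedSeries H (nmin - 1) with hA
    have hAbot : A ≠ ⊥ := Nat.find_min hex (by omega)
    have hAA : ⁅A, A⁆ = ⊥ := by
      have : derivedSeries H (nmin - 1 + 1) = ⁅A, A⁆ := derivedSeries_succ H (nmin - 1)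
      rw [← this]
      rw [show nmin - 1 + 1 = nmin by omega]
      exact hnbot
    have hAcomm : ∀ a b : H, a ∈ A → b ∈ A → a * b = b * a := by
      intro a b ha hb
      have : ⁅a, b⁆ ∈ ⁅A, A⁆ := Subgroup.commutator_mem_commutator ha hb
      rw [hAA] at this
      exact commutatorElement_eq_one_iff_mul_comm.mp (Subgroup.mem_bot.mp this)
    haveI hAnormal : A.Normal := derivedSeries_normal H (nmin - 1)
    -- an element of prime order p in A
    obtain ⟨⟨a, haA⟩, ha1⟩ := Subgroup.ne_bot_iff_exists_ne_one.mp hAbot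
    have ha1' : a ≠ 1 := fun h => ha1 (Subtype.ext h)
    have hoa1 : orderOf a ≠ 1 := fun h => ha1' (orderOf_eq_one_iff.mp h)
    have hoa0 : orderOf a ≠ 0 := (orderOf_pos a).ne'
    set p := (orderOf a).minFac with hpdef
    have hp : p.Prime := Nat.minFac_prime hoa1
    have hpdvd : p ∣ orderOf a := Nat.minFac_dvd _
    set v := a ^ (orderOf a / p) with hvdef
    have hov : orderOf v = p := by
      rw [hvdef, orderOf_pow, Nat.gcd_eq_right (Nat.div_dvd_of_dvd hpdvd),
        Nat.div_div_self hpdvd hoa0]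
    have hvA : v ∈ A := A.pow_mem haA _
    have hv1 : v ≠ 1 := by
      intro h
      rw [h, orderOf_one] at hov
      exact hp.one_lt.ne' hov.symm
    have hvp : v ^ p = 1 := by rw [← hov]; exact pow_orderOf_eq_one v
    -- the subgroup V
    set V : Subgroup H :=
      { carrier := {x | x ∈ A ∧ x ^ p = 1}
        one_mem' := ⟨A.one_mem, one_pow p⟩
        mul_mem' := by
          intro x y hx hy
          refine ⟨A.mul_mem hx.1 hy.1, ?_⟩
          have hcomm : Commute x y := hAcomm x y hx.1 hy.1
          rw [hcomm.mul_pow, hx.2, hy.2, one_mul]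
        inv_mem' := by
          intro x hx
          exact ⟨A.inv_mem hx.1, by rw [inv_pow, hx.2, inv_one]⟩ } with hVdef
    have hVmem : ∀ x : H, x ∈ V ↔ x ∈ A ∧ x ^ p = 1 := fun x => Iff.rfl
    haveI hVnormal : V.Normal := by
      constructor
      intro x hx g
      refine ⟨hAnormal.conj_mem x hx.1 g, ?_⟩
      rw [← MulAut.conj_apply, ← map_pow, hx.2, map_one]
    have hvV : v ∈ V := ⟨hvA, hvp⟩
    have hVcomm : ∀ x ∈ V, ∀ y ∈ V, x * y = y * x := fun x hx y hy => hAcomm x y hx.1 hy.1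
    have hVpp : ∀ x ∈ V, IsPP x := by
      intro x hx
      rcases (Nat.dvd_prime hp).mp (orderOf_dvd_of_pow_eq_one hx.2) with h | h
      · exact ⟨p, 0, hp, by rw [h, pow_zero]⟩
      · exact ⟨p, 1, hp, by rw [h, pow_one]⟩
    have hVne : V ≠ ⊥ := Subgroup.ne_bot_iff_exists_ne_one.mpr
      ⟨⟨v, hvV⟩, fun h => hv1 (congrArg Subtype.val h)⟩
    have hV2 : 2 ≤ Nat.card V := (Subgroup.one_lt_card_iff_ne_bot V).mpr hVne
    have hHcard : Nat.card H = Nat.card (H ⧸ V) * Nat.card V :=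
      Subgroup.card_eq_card_quotient_mul_card_subgroup V
    set Q := Nat.card (H ⧸ V) with hQdef
    have hQpos : 0 < Q := Nat.card_pos
    have hQlt : Q < Nat.card H := by
      calc Q < Q * 2 := by omega
        _ ≤ Q * Nat.card V := Nat.mul_le_mul_left Q hV2
        _ = Nat.card H := hHcard.symm
    have hS1 : 1 ≤ (kppC H).ncard := by
      rw [Nat.one_le_iff_ne_zero, ← Nat.pos_iff_ne_zero, Set.ncard_pos (Set.toFinite _)]
      exact ⟨conjugatesOf (1 : H), ⟨1, isPP_one, rfl⟩⟩
    have hm1 : 1 ≤ m := hS1.trans hm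
    -- bound for the number of classes of the quotient
    have hlift : ∀ C : Set (H ⧸ V), ∃ x : H, C ∈ kppC (H ⧸ V) →
        (IsPP x ∧ conjugatesOf ((x : H ⧸ V)) = C ∧
          (C = conjugatesOf ((1 : H ⧸ V)) → x = 1)) := by
      intro C
      by_cases hC : C ∈ kppC (H ⧸ V)
      · by_cases h1 : C = conjugatesOf ((1 : H ⧸ V))
        · exact ⟨1, fun _ => ⟨isPP_one, by simp [h1], fun _ => rfl⟩⟩
        · obtain ⟨z, hz, hCz⟩ := hC
          obtain ⟨x, hxpp, hxz⟩ := exists_pp_lift V z hz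
          exact ⟨x, fun _ => ⟨hxpp, by rw [hxz, ← hCz], fun hcon => absurd hcon h1⟩⟩
      · exact ⟨1, fun h => absurd h hC⟩
    choose xl hxl using hlift
    have hTS : (kppC (H ⧸ V)).ncard ≤ (kppC H \ {conjugatesOf v}).ncard := by
      apply Set.ncard_le_ncard_of_injOn (fun C => conjugatesOf (xl C))
      · intro C hC
        obtain ⟨hpp, hconj, hone⟩ := hxl C hC
        refine ⟨⟨xl C, hpp, rfl⟩, ?_⟩
        simp only [Set.mem_singleton_iff]
        intro heq
        obtain ⟨g, hg⟩ := isConj_iff.mp (isConj_iff_conjugatesOf_eq.mpr heq)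
        have hxlV : xl C ∈ V := by
          have hmemV : g⁻¹ * v * g⁻¹⁻¹ ∈ V := hVnormal.conj_mem v hvV g⁻¹
          have : xl C = g⁻¹ * v * g⁻¹⁻¹ := by
            rw [← hg]; group
          rw [this]; exact hmemV
        have himg : ((xl C : H ⧸ V)) = 1 := (QuotientGroup.eq_one_iff _).mpr hxlV
        have hCone : C = conjugatesOf ((1 : H ⧸ V)) := by rw [← hconj, himg]
        rw [hone hCone] at hg
        exact hv1 (by simpa using hg.symm)
      · intro C1 h1 C2 h2 heq
        have hconj12 : IsConj (xl C1) (xl C2) := isConj_iff_conjugatesOf_eq.mpr heq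
        have himg := (QuotientGroup.mk' V).map_isConj hconj12
        rw [← (hxl C1 h1).2.1, ← (hxl C2 h2).2.1]
        exact himg.conjugatesOf_eq
    have hvS : conjugatesOf v ∈ kppC H := ⟨v, ⟨p, 1, hp, by rw [hov, pow_one]⟩, rfl⟩
    have hdiff : (kppC H \ {conjugatesOf v}).ncard = (kppC H).ncard - 1 :=
      Set.ncard_diff_singleton_of_mem hvS
    have hT : (kppC (H ⧸ V)).ncard ≤ m - 1 := by omega
    -- bound for the cardinality of V
    have hrep : ∀ C : Set H, ∃ w : H, C ∈ conjugatesOf '' (V : Set H) →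
        (w ∈ V ∧ conjugatesOf w = C) := by
      intro C
      by_cases hC : C ∈ conjugatesOf '' (V : Set H)
      · obtain ⟨w, hw, hwC⟩ := hC
        exact ⟨w, fun _ => ⟨hw, hwC⟩⟩
      · exact ⟨1, fun h => absurd h hC⟩
    choose wr hwr using hrep
    have hwd : ∀ (C : ↥(conjugatesOf '' (V : Set H))) (g₁ g₂ : H),
        @Setoid.r _ (QuotientGroup.leftRel V) g₁ g₂ → g₁ * wr C * g₁⁻¹ = g₂ * wr C * g₂⁻¹ := by
      intro C g₁ g₂ hrel
      rw [QuotientGroup.leftRel_apply] at hrel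
      have hwV : wr (C : Set H) ∈ V := (hwr _ C.2).1
      have hcm := hVcomm _ hrel _ hwV
      have := congrArg (fun z => g₁ * z * g₂⁻¹) hcm
      simp only [mul_assoc] at this ⊢
      rw [show g₁ * (g₁⁻¹ * (g₂ * (wr ↑C * g₂⁻¹))) = g₂ * (wr ↑C * g₂⁻¹) by group] at this
      rw [this]
      group
    set D : ↥(conjugatesOf '' (V : Set H)) × (H ⧸ V) → H :=
      fun Cq => Quotient.liftOn' Cq.2 (fun g => g * wr Cq.1 * g⁻¹) (hwd Cq.1) with hD
    have hcover : (V : Set H) ⊆ Set.range D := by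
      intro x hx
      have hCmem : conjugatesOf x ∈ conjugatesOf '' (V : Set H) := ⟨x, hx, rfl⟩
      obtain ⟨hwV, hwC⟩ := hwr (conjugatesOf x) hCmem
      have hcj : IsConj (wr (conjugatesOf x)) x := by
        rw [isConj_iff_conjugatesOf_eq, hwC]
      obtain ⟨g, hg⟩ := isConj_iff.mp hcj
      exact ⟨(⟨conjugatesOf x, hCmem⟩, (g : H ⧸ V)), by simpa [hD, Quotient.liftOn'_mk''] using hg⟩
    have hVcard : Nat.card V ≤ m * Q := by
      have h1 : Nat.card V = (V : Set H).ncard := by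
        rw [← Nat.card_coe_set_eq]
        rfl
      have h2 := ncard_le_card_of_subset_range hcover
      rw [Nat.card_prod] at h2
      have h3 : Nat.card ↥(conjugatesOf '' (V : Set H)) = (conjugatesOf '' (V : Set H)).ncard :=
        Nat.card_coe_set_eq _
      have h4 : (conjugatesOf '' (V : Set H)).ncard ≤ (kppC H).ncard := by
        apply Set.ncard_le_ncard _ (Set.toFinite _)
        rintro C ⟨w, hw, hC⟩
        exact ⟨w, hVpp w hw, hC.symm⟩
      calc Nat.card V = (V : Set H).ncard := h1
        _ ≤ Nat.card ↥(conjugatesOf '' (V : Set H)) * Nat.card (H ⧸ V) := h2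
        _ ≤ m * Q := by
            rw [h3]
            exact Nat.mul_le_mul (h4.trans hm) le_rfl
    -- induction
    have hQc : Q ≤ c := by omega
    have hQb : Q ≤ ppBound (m - 1) := ih (m - 1) (H ⧸ V)
      (by haveI : Group.IsSolvable H := hsolv; exact (inferInstance : Group.IsSolvable (H ⧸ V))) hQc hT
    calc Nat.card H = Q * Nat.card V := hHcard
      _ ≤ Q * (m * Q) := Nat.mul_le_mul_left Q hVcard
      _ = m * Q ^ 2 := by ring
      _ ≤ m * ppBound (m - 1) ^ 2 := Nat.mul_le_mul_left m (Nat.pow_le_pow_left hQb 2)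
      _ = (m - 1 + 1) * ppBound (m - 1) ^ 2 := by rw [show m - 1 + 1 = m by omega]
      _ = ppBound (m - 1 + 1) := (ppBound_succ (m - 1)).symm
      _ = ppBound m := by rw [show m - 1 + 1 = m by omega]


/-- **Corollary 4.9 / Theorem B, bound for `|G|`.** If `G` is a finite
solvable group and `N ⊴ G` with `|G:N| = n` and `kpp_G(N) = k`, then
`|G| ≤ n · ∏_{i=0}^{nk-1} (nk-i)^(2^i)`. -/
theorem card_solvable_le_of_primePow_G_classes
    {G : Type*} [Group G] [Finite G] (hsolv : IsSolvable G)
    (N : Subgroup G) (hN : N.Normal) (n k : ℕ) (hidx : N.index = n)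
    (hk : {C : Set G | ∃ x : G, x ∈ N ∧ (∃ p m : ℕ, p.Prime ∧ orderOf x = p ^ m) ∧
        C = conjugatesOf x}.ncard = k) :
    Nat.card G ≤ n * ∏ i ∈ Finset.range (n * k), (n * k - i) ^ 2 ^ i := by
  classical
  haveI := hsolv
  haveI : N.Normal := hN
  set SG : Set (Set G) := {C : Set G | ∃ x : G, x ∈ N ∧ IsPP x ∧ C = conjugatesOf x} with hSG
  have hkSG : SG.ncard = k := hk
  -- choose representatives of G-classes
  have hrep : ∀ C : Set G, ∃ x : G, C ∈ SG → (x ∈ N ∧ IsPP x ∧ C = conjugatesOf x) := by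
    intro C
    by_cases hC : C ∈ SG
    · obtain ⟨x, hx1, hx2, hx3⟩ := hC
      exact ⟨x, fun _ => ⟨hx1, hx2, hx3⟩⟩
    · exact ⟨1, fun h => absurd h hC⟩
  choose rx hrx using hrep
  have hmem : ∀ (C : ↥SG) (g : G), g * rx C * g⁻¹ ∈ N :=
    fun C g => hN.conj_mem _ (hrx C C.2).1 g
  have hwd : ∀ (C : ↥SG) (g₁ g₂ : G), @Setoid.r _ (QuotientGroup.leftRel N) g₁ g₂ →
      conjugatesOf (⟨g₁ * rx C * g₁⁻¹, hmem C g₁⟩ : ↥N) =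
        conjugatesOf (⟨g₂ * rx C * g₂⁻¹, hmem C g₂⟩ : ↥N) := by
    intro C g₁ g₂ hrel
    rw [QuotientGroup.leftRel_apply] at hrel
    apply IsConj.conjugatesOf_eq
    have hwN : g₂ * g₁⁻¹ ∈ N := by
      have : g₂ * g₁⁻¹ = g₁ * (g₁⁻¹ * g₂) * g₁⁻¹ := by group
      rw [this]
      exact hN.conj_mem _ hrel g₁
    refine isConj_iff.mpr ⟨⟨g₂ * g₁⁻¹, hwN⟩, ?_⟩
    apply Subtype.ext
    push_cast
    group
  set D : ↥SG × (G ⧸ N) → Set ↥N := fun Cq =>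
    Quotient.liftOn' Cq.2 (fun g => conjugatesOf (⟨g * rx Cq.1 * g⁻¹, hmem Cq.1 g⟩ : ↥N))
      (hwd Cq.1) with hD
  have hcover : kppC ↥N ⊆ Set.range D := by
    rintro _ ⟨y, hypp, rfl⟩
    have hyG : IsPP (y : G) := by
      obtain ⟨p, m, hp, ho⟩ := hypp
      exact ⟨p, m, hp, by rw [Subgroup.orderOf_coe, ho]⟩
    have hC : conjugatesOf (y : G) ∈ SG := ⟨(y : G), y.2, hyG, rfl⟩
    obtain ⟨hxN, hxpp, hxC⟩ := hrx _ hC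
    have hcj : IsConj (rx (conjugatesOf (y : G))) (y : G) :=
      isConj_iff_conjugatesOf_eq.mpr hxC.symm
    obtain ⟨g, hg⟩ := isConj_iff.mp hcj
    refine ⟨(⟨conjugatesOf (y : G), hC⟩, (g : G ⧸ N)), ?_⟩
    show Quotient.liftOn' _ _ _ = _
    rw [show ((g : G ⧸ N)) = Quotient.mk'' g from rfl, Quotient.liftOn'_mk'']
    exact congrArg conjugatesOf (Subtype.ext hg)
  have hcount : (kppC ↥N).ncard ≤ n * k := by
    have h1 := ncard_le_card_of_subset_range hcover
    rw [Nat.card_prod] at h1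
    have h2 : Nat.card ↥SG = k := by rw [Nat.card_coe_set_eq, hkSG]
    have h3 : Nat.card (G ⧸ N) = n := by rw [← Subgroup.index_eq_card, hidx]
    calc (kppC ↥N).ncard ≤ Nat.card ↥SG * Nat.card (G ⧸ N) := h1
      _ = k * n := by rw [h2, h3]
      _ = n * k := mul_comm k n
  have hNbound : Nat.card ↥N ≤ ppBound (n * k) :=
    key_bound (Nat.card ↥N) (n * k) ↥N
      (by haveI : Group.IsSolvable G := hsolv; exact (inferInstance : Group.IsSolvable ↥N)) le_rfl hcount
  have hGN : N.index * Nat.card ↥N = Nat.card G := Subgroup.index_mul_card N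
  calc Nat.card G = n * Nat.card ↥N := by rw [← hGN, hidx]
    _ ≤ n * ppBound (n * k) := Nat.mul_le_mul_left n hNbound
    _ = n * ∏ i ∈ Finset.range (n * k), (n * k - i) ^ 2 ^ i := rfl
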